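/- Let 𝔰 be a real Lie subalgebra of the d×d complex matrices (with bracket [X,Y] = XY − YX) all of whose elements are skew-Hermitian, and let 𝔱 ⊆ 𝔰 be a maximal abelian Lie subalgebra of 𝔰 (an abelian Lie subalgebra of 𝔰 not properly contained in any abelian Lie subalgebra of 𝔰) all of whose elements are diagonal matrices. Then for every X ∈ 𝔰, the diagonal matrix whose j-th diagonal entry is X_{jj} also belongs to 𝔰. -/

import Mathlib

open Matrix

attribute [local instance 100] LieRing.ofAssociativeRing

noncomputable def frobB (d : ℕ) : LinearMap.BilinForm ℝ (Matrix (Fin d) (Fin d) ℂ) :=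
  LinearMap.mk₂ ℝ (fun X Y => (Matrix.trace (Xᴴ * Y)).re)
    (fun X X' Y => by simp [conjTranspose_add, Matrix.add_mul])
    (fun r X Y => by
      simp [conjTranspose_smul, Matrix.smul_mul, Complex.real_smul])
    (fun X Y Y' => by simp [Matrix.mul_add])
    (fun r X Y => by simp [Matrix.mul_smul, Complex.real_smul])

lemma frobB_comm (d : ℕ) (X Y : Matrix (Fin d) (Fin d) ℂ) : frobB d X Y = frobB d Y X := by
  have h : Yᴴ * X = (Xᴴ * Y)ᴴ := by rw [conjTranspose_mul, conjTranspose_conjTranspose]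
  simp only [frobB, LinearMap.mk₂_apply]
  rw [h, trace_conjTranspose]
  simp

lemma frobB_self_eq (d : ℕ) (X : Matrix (Fin d) (Fin d) ℂ) :
    frobB d X X = ∑ i, ∑ j, Complex.normSq (X j i) := by
  simp only [frobB, LinearMap.mk₂_apply, Matrix.trace, Matrix.diag, Matrix.mul_apply,
    Matrix.conjTranspose_apply, Complex.re_sum]
  refine Finset.sum_congr rfl fun i _ => Finset.sum_congr rfl fun j _ => ?_
  rw [Complex.star_def, mul_comm, Complex.mul_conj]
  simp

lemma frobB_self (d : ℕ) (X : Matrix (Fin d) (Fin d) ℂ) (h : frobB d X X = 0) : X = 0 := by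
  rw [frobB_self_eq] at h
  ext j i
  have h1 : ∀ i ∈ Finset.univ, (0:ℝ) ≤ ∑ j, Complex.normSq (X j i) :=
    fun i _ => Finset.sum_nonneg fun j _ => Complex.normSq_nonneg _
  have h2 := (Finset.sum_eq_zero_iff_of_nonneg h1).1 h i (Finset.mem_univ i)
  have h3 := (Finset.sum_eq_zero_iff_of_nonneg
    (fun j _ => Complex.normSq_nonneg (X j i))).1 h2 j (Finset.mem_univ j)
  simpa using Complex.normSq_eq_zero.1 h3

lemma frobB_skew (d : ℕ) (T A C : Matrix (Fin d) (Fin d) ℂ) (hT : Tᴴ = -T) :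
    frobB d ⁅T, A⁆ C = - frobB d A ⁅T, C⁆ := by
  have key : Matrix.trace ((⁅T, A⁆)ᴴ * C) = - Matrix.trace (Aᴴ * ⁅T, C⁆) := by
    simp only [Ring.lie_def, conjTranspose_sub, conjTranspose_mul, hT,
      Matrix.sub_mul, Matrix.mul_sub, Matrix.mul_neg, Matrix.neg_mul, trace_sub, trace_neg]
    rw [show (T * Aᴴ * C).trace = (Aᴴ * C * T).trace from by
      rw [Matrix.mul_assoc, trace_mul_comm, Matrix.mul_assoc]]
    simp only [Matrix.mul_assoc]
    ring
  simp only [frobB, LinearMap.mk₂_apply, key]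
  simp

/-- Let `𝔰` be a real Lie subalgebra of the `d×d` complex matrices all of whose elements are
skew-Hermitian, and let `𝔱 ⊆ 𝔰` be a maximal abelian Lie subalgebra of `𝔰` all of whose
elements are diagonal matrices. Then for every `X ∈ 𝔰`, the diagonal matrix whose `j`-th
diagonal entry is `X j j` also belongs to `𝔰`. -/
theorem stmt_11 (d : ℕ) (s t : LieSubalgebra ℝ (Matrix (Fin d) (Fin d) ℂ))
    (hskew : ∀ X ∈ s, Xᴴ = -X)
    (hts : t ≤ s)
    (habelian : ∀ X ∈ t, ∀ Y ∈ t, ⁅X, Y⁆ = 0)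
    (hmax : ∀ t' : LieSubalgebra ℝ (Matrix (Fin d) (Fin d) ℂ),
      t' ≤ s → (∀ X ∈ t', ∀ Y ∈ t', ⁅X, Y⁆ = 0) → t ≤ t' → t' = t)
    (hdiag : ∀ X ∈ t, ∀ j k : Fin d, j ≠ k → X j k = 0) :
    ∀ X ∈ s, (Matrix.diagonal fun j => X j j) ∈ s := by
  intro X hX
  classical
  set U : Submodule ℝ (Matrix (Fin d) (Fin d) ℂ) :=
    Submodule.span ℝ {m | ∃ T ∈ t, ∃ v ∈ s, m = ⁅T, v⁆} with hUdef
  have hgen : ∀ T ∈ t, ∀ v ∈ s, ⁅T, v⁆ ∈ U := fun T hT v hv =>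
    Submodule.subset_span ⟨T, hT, v, hv, rfl⟩
  have hUs : ∀ u ∈ U, u ∈ s := by
    intro u hu
    have hle : U ≤ s.toSubmodule := Submodule.span_le.2 (by
      rintro m ⟨T, hT, v, hv, rfl⟩
      exact s.lie_mem (hts hT) hv)
    exact (LieSubalgebra.mem_toSubmodule _).1 (hle hu)
  -- every element of U has zero diagonal
  have hUdiag : ∀ u ∈ U, ∀ j : Fin d, u j j = 0 := by
    intro u hu j
    let ev : Matrix (Fin d) (Fin d) ℂ →ₗ[ℝ] ℂ :=
      { toFun := fun m => m j j, map_add' := fun _ _ => rfl, map_smul' := fun _ _ => rfl }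
    have hle : U ≤ LinearMap.ker ev := Submodule.span_le.2 (by
      rintro m ⟨T, hT, v, hv, rfl⟩
      have : (⁅T, v⁆ : Matrix (Fin d) (Fin d) ℂ) j j = 0 := by
        rw [Ring.lie_def]
        simp only [Matrix.sub_apply, Matrix.mul_apply]
        rw [Finset.sum_eq_single j (fun l _ hl => by
            rw [hdiag T hT j l (Ne.symm hl), zero_mul]) (by simp),
          Finset.sum_eq_single j (fun l _ hl => by
            rw [hdiag T hT l j hl, mul_zero]) (by simp)]
        ring
      exact this)
    exact hle hu
  have hrefl : (frobB d).IsRefl := fun x y h => by rw [frobB_comm]; exact h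
  have hres : ((frobB d).restrict U).Nondegenerate := by
    refine (LinearMap.IsRefl.nondegenerate_iff_separatingLeft (B := (frobB d).restrict U) (fun x y h => hrefl _ _ h)).2 ?_
    rintro ⟨x, hx⟩ h
    have h1 := h ⟨x, hx⟩
    simp only [LinearMap.BilinForm.restrict_apply, LinearMap.domRestrict_apply] at h1
    exact Subtype.ext (frobB_self d x h1)
  have hcompl := LinearMap.BilinForm.isCompl_orthogonal_of_restrict_nondegenerate
    (B := frobB d) hrefl hres
  have hXsup : X ∈ U ⊔ (frobB d).orthogonal U := by rw [hcompl.sup_eq_top]; trivial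
  obtain ⟨u, hu, y, hy, hXuy⟩ := Submodule.mem_sup.1 hXsup
  have hys : y ∈ s := by
    have h1 : X - u ∈ s := s.sub_mem hX (hUs u hu)
    have h2 : y = X - u := eq_sub_of_add_eq' hXuy
    rwa [h2]
  -- y commutes with everything in t
  have hYcomm : ∀ T ∈ t, ⁅T, y⁆ = 0 := by
    intro T hT
    have hCs : (⁅T, y⁆ : Matrix (Fin d) (Fin d) ℂ) ∈ s := s.lie_mem (hts hT) hys
    have h2 : (⁅T, ⁅T, y⁆⁆ : Matrix (Fin d) (Fin d) ℂ) ∈ U := hgen T hT _ hCs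
    have hOrth := (LinearMap.BilinForm.mem_orthogonal_iff.1 hy) _ h2
    have h0 : frobB d ⁅T, y⁆ ⁅T, y⁆ = 0 := by
      rw [frobB_skew d T y _ (hskew T (hts hT)), frobB_comm]
      rw [hOrth]
      simp
    exact frobB_self d _ h0
  -- build the abelian subalgebra t ⊔ span y
  have hbr : ∀ a ∈ t.toSubmodule ⊔ Submodule.span ℝ {y},
      ∀ b ∈ t.toSubmodule ⊔ Submodule.span ℝ {y}, ⁅a, b⁆ = 0 := by
    intro a ha b hb
    obtain ⟨p, hp, a', ha', rfl⟩ := Submodule.mem_sup.1 ha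
    obtain ⟨q, hq, b', hb', rfl⟩ := Submodule.mem_sup.1 hb
    obtain ⟨c, rfl⟩ := Submodule.mem_span_singleton.1 ha'
    obtain ⟨c', rfl⟩ := Submodule.mem_span_singleton.1 hb'
    have hp' : p ∈ t := (LieSubalgebra.mem_toSubmodule _).1 hp
    have hq' : q ∈ t := (LieSubalgebra.mem_toSubmodule _).1 hq
    have hyq : (⁅y, q⁆ : Matrix (Fin d) (Fin d) ℂ) = 0 := by
      rw [← lie_skew, hYcomm q hq', neg_zero]
    simp [lie_add, add_lie, lie_smul, smul_lie, habelian p hp' q hq',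
      hYcomm p hp', hyq, lie_self]
  let t' : LieSubalgebra ℝ (Matrix (Fin d) (Fin d) ℂ) :=
    { toSubmodule := t.toSubmodule ⊔ Submodule.span ℝ {y},
      lie_mem' := fun {a b} ha hb => by
        rw [hbr a ha b hb]; exact Submodule.zero_mem _ }
  have hle' : t' ≤ s := by
    intro z hz
    obtain ⟨p, hp, a', ha', rfl⟩ := Submodule.mem_sup.1 hz
    obtain ⟨c, rfl⟩ := Submodule.mem_span_singleton.1 ha'
    exact s.add_mem (hts ((LieSubalgebra.mem_toSubmodule _).1 hp)) (s.smul_mem c hys)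
  have ht' : t' = t := hmax t' hle' hbr (fun z hz => Submodule.mem_sup_left hz)
  have hyt : y ∈ t := by
    have h1 : y ∈ t' := Submodule.mem_sup_right (Submodule.mem_span_singleton_self y)
    rwa [ht'] at h1
  have hyd := hdiag y hyt
  have heq : (Matrix.diagonal fun j => X j j) = y := by
    ext j k
    by_cases hjk : j = k
    · subst hjk
      rw [Matrix.diagonal_apply_eq]
      have h1 : X j j = u j j + y j j := by rw [← hXuy]; rfl
      rw [h1, hUdiag u hu j, zero_add]
    · rw [Matrix.diagonal_apply_ne _ hjk]
      exact (hyd j k hjk).symm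
  rw [heq]
  exact hts hyt
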